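/- arXiv:math/0403066 — 2 statements merged into one kernel-verified Lean document; each statement's English description precedes it below -/
import Mathlib

section
/- Let Φ : L[X^∨] → H, e^τ ↦ Y_τ := H_{t_λ} H_{t_μ}^{−1} (where τ = λ − μ with λ, μ dominant), be the Bernstein homomorphism. Then the image Φ(L[X^∨]^{W_f}) of the W_f-invariant group algebra lies in the center of the extended affine Hecke algebra H. -/
/- The image under the Bernstein homomorphism `Φ : L[X^∨] → H` of the `W_f`-invariants
`L[X^∨]^{W_f}` lies in the center of the extended affine Hecke algebra `H`.
The Bernstein–Lusztig commutation relations are stated in divisibility form: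
`(1 - e^{-2α^∨}) η = ξ - sξ` replaces `η = (ξ - sξ)/(1 - e^{-2α^∨})`. -/

/-- the action of the simple reflection `s_α` on the group algebra `L[X^∨]`,
`e^τ ↦ e^{s_α(τ)}` with `s_α(τ) = τ - α(τ) α^∨`. -/
noncomputable def reflAct {L : Type*} [CommRing L] {Xv : Type*} [AddCommGroup Xv]
    (α : Xv →+ ℤ) (c : Xv) (ξ : AddMonoidAlgebra L Xv) : AddMonoidAlgebra L Xv :=
  AddMonoidAlgebra.mapDomain (fun τ => τ - α τ • c) ξ

theorem Bernstein_invariants_central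
    {L : Type*} [CommRing L] {Xv : Type*} [AddCommGroup Xv]
    {H : Type*} [Ring H] [Algebra L H]
    -- simple roots and coroots
    (Sf : Finset (Xv →+ ℤ)) (coroot : (Xv →+ ℤ) → Xv)
    -- parameters `v^s`, `v_0^s` and the generators `H_s` for the simple reflections
    (v v0 : (Xv →+ ℤ) → Lˣ) (Hs : (Xv →+ ℤ) → H)
    -- the Bernstein homomorphism
    (Φ : AddMonoidAlgebra L Xv →ₐ[L] H)
    -- `H` is generated as an `L`-algebra by the `Y_τ = Φ(e^τ)` and the `H_s`
    (hgen : Algebra.adjoin L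
        (Set.range (fun τ : Xv => Φ (AddMonoidAlgebra.single τ 1)) ∪ (Hs '' Sf)) = ⊤)
    -- Bernstein–Lusztig relations
    (hBL : ∀ α ∈ Sf, ∀ ξ η : AddMonoidAlgebra L Xv,
      (1 - AddMonoidAlgebra.single (-(2 • coroot α)) (1 : L)) * η
          = ξ - reflAct α (coroot α) ξ →
      Hs α * Φ ξ - Φ (reflAct α (coroot α) ξ) * Hs α
        = algebraMap L H (↑(v α)⁻¹ - ↑(v α)) * Φ η
          + algebraMap L H (↑(v0 α)⁻¹ - ↑(v0 α))
            * Φ (AddMonoidAlgebra.single (-(coroot α)) (1 : L) * η))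
    -- a `W_f`-invariant element (invariance under all simple reflections)
    (ξ : AddMonoidAlgebra L Xv)
    (hinv : ∀ α ∈ Sf, reflAct α (coroot α) ξ = ξ) :
    Φ ξ ∈ Subalgebra.center L H := by
  rw [Subalgebra.mem_center_iff]
  intro h
  have hh : h ∈ Algebra.adjoin L
      (Set.range (fun τ : Xv => Φ (AddMonoidAlgebra.single τ 1)) ∪ (Hs '' Sf)) := by
    rw [hgen]; trivial
  induction hh using Algebra.adjoin_induction with
  | mem x hx =>
    rcases hx with ⟨τ, rfl⟩ | ⟨α, hα, rfl⟩
    · rw [← map_mul, ← map_mul, mul_comm]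
    · have h0 := hBL α hα ξ 0 (by rw [hinv α hα, mul_zero, sub_self])
      rw [hinv α hα, mul_zero, map_zero, mul_zero, mul_zero, add_zero] at h0
      exact sub_eq_zero.mp h0
  | algebraMap r => exact Algebra.commutes r (Φ ξ)
  | add x y _ _ ihx ihy => rw [add_mul, mul_add, ihx, ihy]
  | mul x y _ _ ihx ihy => rw [mul_assoc, ihy, ← mul_assoc, ihx, mul_assoc]
end

section
/- For w ∈ W_f define Φ_w : L[X^∨] → H by e^τ ↦ Y_τ^{(w)} := H_{t_λ} H_{t_μ}^{−1} where λ, μ ∈ w(X^∨_+) and τ = λ − μ. Then Φ_w(ξ) = H_w Φ(w^{−1} ξ) H_w^{−1} for all ξ ∈ L[X^∨]. -/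
/- For `w ∈ W_f`, the Bernstein map `Φ_w` attached to the chamber `w(X^∨_+)`
satisfies `Φ_w(ξ) = H_w Φ(w⁻¹ ξ) H_w⁻¹` for all `ξ ∈ L[X^∨]`. -/

/-- the action of a linear automorphism of `X^∨` on the group algebra `L[X^∨]`,
`e^τ ↦ e^{g(τ)}`. -/
noncomputable def grpAct {L : Type*} [CommRing L] {Xv : Type*} [AddCommGroup Xv]
    (g : Xv ≃+ Xv) (ξ : AddMonoidAlgebra L Xv) : AddMonoidAlgebra L Xv :=
  AddMonoidAlgebra.mapDomain g ξ

theorem Bernstein_map_conjugate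
    {L : Type*} [CommRing L] {H : Type*} [Ring H] [Algebra L H]
    {W : Type*} [Group W] {Xv : Type*} [AddCommGroup Xv]
    -- the standard basis, length, braid relations
    (b : Module.Basis W L H) (ℓ : W → ℕ)
    (hbraid : ∀ u u' : W, ℓ (u * u') = ℓ u + ℓ u' → b (u * u') = b u * b u')
    -- the finite Weyl group `W_f ⊆ W` acting linearly on `X^∨`
    {Wfg : Type*} [Group Wfg] (ι : Wfg →* W) (hι : Function.Injective ι)
    (σ : Wfg →* Multiplicative (Xv ≃+ Xv))
    -- translations, compatibly with the `W_f`-action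
    (t : Xv → W) (ht : ∀ lam mu : Xv, t (lam + mu) = t lam * t mu)
    (hconj : ∀ (g : Wfg) (τ : Xv), ι g * t τ * (ι g)⁻¹ = t ((Multiplicative.toAdd (σ g)) τ))
    -- the dominant cone
    (dominant : Xv → Prop)
    (hdomadd : ∀ lam mu, dominant lam → dominant mu → dominant (lam + mu))
    (hdomex : ∀ τ : Xv, ∃ lam mu, dominant lam ∧ dominant mu ∧ τ = lam - mu)
    -- key length identities
    (hlen1 : ∀ (g : Wfg) (τ : Xv), dominant τ →
      ℓ (ι g * t τ) = ℓ (ι g) + ℓ (t τ))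
    (hlen2 : ∀ (g : Wfg) (τ : Xv), ℓ (t ((Multiplicative.toAdd (σ g)) τ)) = ℓ (t τ))
    (hlenadd : ∀ lam mu, dominant lam → dominant mu →
      ℓ (t lam * t mu) = ℓ (t lam) + ℓ (t mu))
    -- the Bernstein maps `Φ = Φ_e` and `Φ_w`, characterized on the respective chambers
    (w : Wfg)
    (Φ Φw : AddMonoidAlgebra L Xv →ₐ[L] H)
    (hΦ : ∀ lam : Xv, dominant lam → Φ (AddMonoidAlgebra.single lam 1) = b (t lam))
    (hΦw : ∀ lam : Xv, dominant lam →
      Φw (AddMonoidAlgebra.single ((Multiplicative.toAdd (σ w)) lam) 1) = b (t ((Multiplicative.toAdd (σ w)) lam)))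
    (hu : IsUnit (b (ι w))) :
    ∀ ξ : AddMonoidAlgebra L Xv,
      Φw ξ = b (ι w) * Φ (grpAct (Multiplicative.toAdd (σ w⁻¹)) ξ) * ↑hu.unit⁻¹ := by
  classical
  -- every `single a 1` is a unit in the group algebra
  have hsu : ∀ a : Xv, IsUnit (AddMonoidAlgebra.single a (1:L) : AddMonoidAlgebra L Xv) := by
    intro a
    refine ⟨⟨AddMonoidAlgebra.single a 1, AddMonoidAlgebra.single (-a) 1, ?_, ?_⟩, rfl⟩
    · rw [AddMonoidAlgebra.single_mul_single, one_mul, add_neg_cancel]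
      rfl
    · rw [AddMonoidAlgebra.single_mul_single, one_mul, neg_add_cancel]
      rfl
  -- braid relation conjugated through `w`
  have h5 : ∀ ν : Xv, dominant ν → b (ι w) * b (t ν) = b (t (Multiplicative.toAdd (σ w) ν)) * b (ι w) := by
    intro ν hν
    have e1 : b (ι w * t ν) = b (ι w) * b (t ν) := hbraid _ _ (hlen1 w ν hν)
    have e2 : ι w * t ν = t (Multiplicative.toAdd (σ w) ν) * ι w := by
      rw [← hconj w ν]
      group
    have e3 : ℓ (t (Multiplicative.toAdd (σ w) ν) * ι w) = ℓ (t (Multiplicative.toAdd (σ w) ν)) + ℓ (ι w) := by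
      rw [← e2, hlen1 w ν hν, hlen2 w ν, Nat.add_comm]
    have e4 : b (t (Multiplicative.toAdd (σ w) ν) * ι w) = b (t (Multiplicative.toAdd (σ w) ν)) * b (ι w) := hbraid _ _ e3
    rw [← e1, e2, e4]
  -- the key computation on basis elements of the group algebra
  have key : ∀ τ : Xv, Φw (AddMonoidAlgebra.single (Multiplicative.toAdd (σ w) τ) 1) =
      b (ι w) * Φ (AddMonoidAlgebra.single τ 1) * ↑hu.unit⁻¹ := by
    intro τ
    obtain ⟨lam, mu, hlam, hmu, rfl⟩ := hdomex τ
    have hv : IsUnit (b (t (Multiplicative.toAdd (σ w) mu))) := by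
      rw [← hΦw mu hmu]; exact (hsu _).map Φw
    have h1 : Φ (AddMonoidAlgebra.single (lam - mu) 1) * b (t mu) = b (t lam) := by
      rw [← hΦ mu hmu, ← map_mul, AddMonoidAlgebra.single_mul_single, one_mul,
        sub_add_cancel, hΦ lam hlam]
    have h3 : Φw (AddMonoidAlgebra.single (Multiplicative.toAdd (σ w) (lam - mu)) 1) * b (t (Multiplicative.toAdd (σ w) mu)) =
        b (t (Multiplicative.toAdd (σ w) lam)) := by
      rw [← hΦw mu hmu, ← map_mul, AddMonoidAlgebra.single_mul_single, one_mul,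
        ← map_add, sub_add_cancel, hΦw lam hlam]
    have hswap : (↑hu.unit⁻¹ : H) * b (t (Multiplicative.toAdd (σ w) mu)) = b (t mu) * ↑hu.unit⁻¹ := by
      have h5m := h5 mu hmu
      rw [← hu.unit_spec] at h5m
      calc (↑hu.unit⁻¹ : H) * b (t (Multiplicative.toAdd (σ w) mu))
          = ↑hu.unit⁻¹ * (b (t (Multiplicative.toAdd (σ w) mu)) * ↑hu.unit) * ↑hu.unit⁻¹ := by
            rw [mul_assoc, mul_assoc]
            simp
        _ = ↑hu.unit⁻¹ * (↑hu.unit * b (t mu)) * ↑hu.unit⁻¹ := by rw [h5m]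
        _ = b (t mu) * ↑hu.unit⁻¹ := by
            rw [← mul_assoc]
            simp
    refine hv.mul_right_cancel ?_
    rw [h3, mul_assoc _ _ (b (t (Multiplicative.toAdd (σ w) mu))), hswap, ← mul_assoc,
      mul_assoc (b (ι w)), h1, h5 lam hlam, mul_assoc]
    simp
  -- identify `Multiplicative.toAdd (σ w) (Multiplicative.toAdd (σ w⁻¹) a) = a`
  have hcomp : ∀ a : Xv, Multiplicative.toAdd (σ w) (Multiplicative.toAdd (σ w⁻¹) a) = a := by
    intro a
    have h1 : σ w * σ w⁻¹ = 1 := by rw [← map_mul, mul_inv_cancel, map_one]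
    have h2 : (Multiplicative.toAdd (σ w * σ w⁻¹)) a = a := by rw [h1]; rfl
    exact h2
  have key' : ∀ (a : Xv) (c : L), Φw (AddMonoidAlgebra.single a c) =
      b (ι w) * Φ (grpAct (Multiplicative.toAdd (σ w⁻¹)) (AddMonoidAlgebra.single a c)) * ↑hu.unit⁻¹ := by
    intro a c
    have hs : (AddMonoidAlgebra.single a c : AddMonoidAlgebra L Xv)
        = c • AddMonoidAlgebra.single a 1 := by
      rw [AddMonoidAlgebra.smul_single' c a 1, mul_one]
    have hg : grpAct (Multiplicative.toAdd (σ w⁻¹)) (AddMonoidAlgebra.single a c)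
        = (AddMonoidAlgebra.single (Multiplicative.toAdd (σ w⁻¹) a) c : AddMonoidAlgebra L Xv) := by
      simp [grpAct, AddMonoidAlgebra.mapDomain_single]
    have hs' : (AddMonoidAlgebra.single (Multiplicative.toAdd (σ w⁻¹) a) c : AddMonoidAlgebra L Xv)
        = c • AddMonoidAlgebra.single (Multiplicative.toAdd (σ w⁻¹) a) 1 := by
      rw [AddMonoidAlgebra.smul_single' c _ 1, mul_one]
    rw [hg, hs, hs', map_smul, map_smul, mul_smul_comm, smul_mul_assoc]
    congr 1
    have := key (Multiplicative.toAdd (σ w⁻¹) a)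
    rwa [hcomp a] at this
  intro ξ
  induction ξ using AddMonoidAlgebra.induction_linear with
  | zero =>
    simp [grpAct, AddMonoidAlgebra.mapDomain_zero]
  | add f g hf hg =>
    have : grpAct (Multiplicative.toAdd (σ w⁻¹)) (f + g) = grpAct (Multiplicative.toAdd (σ w⁻¹)) f + grpAct (Multiplicative.toAdd (σ w⁻¹)) g := by
      simp [grpAct, AddMonoidAlgebra.mapDomain_add]
    rw [map_add, hf, hg, this, map_add, mul_add, add_mul]
  | single a c =>
    exact key' a c
end
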